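/- Let U, U* ∈ ℝ^{n×r} have orthonormal columns. Then min over orthogonal R ∈ O(r) of ‖U R − U*‖ is at most √2 · ‖U Uᵀ − U* U*ᵀ‖. -/

import Mathlib

open Matrix

noncomputable def spec {m n : ℕ} (A : Matrix (Fin m) (Fin n) ℝ) : ℝ :=
  ‖(Matrix.toEuclideanLin A).toContinuousLinearMap‖

namespace SpecAux

lemma ct_eq {m n : ℕ} (A : Matrix (Fin m) (Fin n) ℝ) : Aᴴ = Aᵀ := by
  ext i j; simp [conjTranspose]

lemma spec_nonneg {m n : ℕ} (A : Matrix (Fin m) (Fin n) ℝ) : 0 ≤ spec A := norm_nonneg _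

lemma toCLM_mul {m n p : ℕ} (A : Matrix (Fin m) (Fin n) ℝ) (B : Matrix (Fin n) (Fin p) ℝ) :
    (Matrix.toEuclideanLin (A * B)).toContinuousLinearMap =
      (Matrix.toEuclideanLin A).toContinuousLinearMap ∘L
        (Matrix.toEuclideanLin B).toContinuousLinearMap := by
  ext x
  simp [Matrix.toEuclideanLin_apply, Matrix.mulVec_mulVec]

lemma spec_mul_le {m n p : ℕ} (A : Matrix (Fin m) (Fin n) ℝ) (B : Matrix (Fin n) (Fin p) ℝ) :
    spec (A * B) ≤ spec A * spec B := by
  rw [spec, toCLM_mul]; exact ContinuousLinearMap.opNorm_comp_le _ _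

lemma spec_add_le {m n : ℕ} (A B : Matrix (Fin m) (Fin n) ℝ) :
    spec (A + B) ≤ spec A + spec B := by
  rw [spec, map_add, map_add]; exact norm_add_le _ _

lemma spec_neg {m n : ℕ} (A : Matrix (Fin m) (Fin n) ℝ) : spec (-A) = spec A := by
  rw [spec, map_neg, map_neg]; exact norm_neg _

lemma spec_transpose {m n : ℕ} (A : Matrix (Fin m) (Fin n) ℝ) : spec Aᵀ = spec A := by
  rw [spec, ← ct_eq, Matrix.toEuclideanLin_conjTranspose_eq_adjoint,
    LinearMap.adjoint_toContinuousLinearMap]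
  exact LinearIsometryEquiv.norm_map _ _

lemma spec_transpose_mul_self {m n : ℕ} (A : Matrix (Fin m) (Fin n) ℝ) :
    spec (Aᵀ * A) = spec A * spec A := by
  rw [spec, toCLM_mul, ← ct_eq, Matrix.toEuclideanLin_conjTranspose_eq_adjoint,
    LinearMap.adjoint_toContinuousLinearMap]
  exact ContinuousLinearMap.norm_adjoint_comp_self _

lemma spec_one_le {m : ℕ} : spec (1 : Matrix (Fin m) (Fin m) ℝ) ≤ 1 := by
  rw [spec]
  have : (Matrix.toEuclideanLin (1 : Matrix (Fin m) (Fin m) ℝ)).toContinuousLinearMap =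
      ContinuousLinearMap.id ℝ _ := by
    ext x; simp [Matrix.toEuclideanLin_apply]
  rw [this]
  exact ContinuousLinearMap.norm_id_le


lemma spec_le_of_forall {m n : ℕ} (A : Matrix (Fin m) (Fin n) ℝ) {c : ℝ} (hc : 0 ≤ c)
    (h : ∀ y : EuclideanSpace ℝ (Fin n), ‖Matrix.toEuclideanLin A y‖ ≤ c * ‖y‖) :
    spec A ≤ c :=
  ContinuousLinearMap.opNorm_le_bound _ hc h

lemma spec_orth_le_one {n r : ℕ} {R : Matrix (Fin n) (Fin r) ℝ} (hR : Rᵀ * R = 1) :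
    spec R ≤ 1 := by
  have h1 : spec R * spec R = spec (Rᵀ * R) := (spec_transpose_mul_self R).symm
  rw [hR] at h1
  have h2 : spec (1 : Matrix (Fin r) (Fin r) ℝ) ≤ 1 := spec_one_le
  nlinarith [spec_nonneg R]

lemma inner_posSemidef {r : ℕ} {P : Matrix (Fin r) (Fin r) ℝ} (hP : P.PosSemidef)
    (x : EuclideanSpace ℝ (Fin r)) :
    0 ≤ (inner ℝ x (Matrix.toEuclideanLin P x) : ℝ) := by
  have h := hP.dotProduct_mulVec_nonneg ((WithLp.equiv 2 (Fin r → ℝ)) x)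
  simpa [Matrix.toEuclideanLin_apply, PiLp.inner_apply, dotProduct,
    mul_comm] using h

lemma spec_inv_one_add_le {r : ℕ} {P : Matrix (Fin r) (Fin r) ℝ} (hP : P.PosSemidef) :
    spec (1 + P)⁻¹ ≤ 1 := by
  have hpd : Matrix.PosDef (1 + P) := Matrix.PosDef.add_posSemidef Matrix.PosDef.one hP
  have hdet : IsUnit (1 + P).det := (Matrix.isUnit_iff_isUnit_det _).mp hpd.isUnit
  have hinv : (1 + P) * (1 + P)⁻¹ = 1 := Matrix.mul_nonsing_inv _ hdet
  refine spec_le_of_forall _ zero_le_one fun y => ?_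
  set x := Matrix.toEuclideanLin (1 + P)⁻¹ y with hx
  have hyx : Matrix.toEuclideanLin (1 + P) x = y := by
    rw [hx]
    have : Matrix.toEuclideanLin ((1 + P) * (1 + P)⁻¹) y =
        Matrix.toEuclideanLin (1 + P) (Matrix.toEuclideanLin (1 + P)⁻¹ y) := by
      simp only [Matrix.toEuclideanLin_apply, Equiv.apply_symm_apply, Matrix.mulVec_mulVec]
    rw [← this, hinv]
    simp [Matrix.toEuclideanLin_apply]
  have key : ‖x‖ ^ 2 ≤ ‖y‖ * ‖x‖ := by
    have h1 : (inner ℝ x y : ℝ) = ‖x‖ ^ 2 + inner ℝ x (Matrix.toEuclideanLin P x) := by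
      rw [← hyx]
      have : Matrix.toEuclideanLin (1 + P) x = x + Matrix.toEuclideanLin P x := by
        rw [map_add]
        simp [Matrix.toEuclideanLin_apply, Matrix.one_mulVec]
      rw [this, inner_add_right, real_inner_self_eq_norm_sq]
    have h2 : (0:ℝ) ≤ inner ℝ x (Matrix.toEuclideanLin P x) := inner_posSemidef hP x
    have h3 : (inner ℝ x y : ℝ) ≤ ‖x‖ * ‖y‖ := real_inner_le_norm x y
    nlinarith
  have hxnn : 0 ≤ ‖x‖ := norm_nonneg _
  rw [one_mul]
  rcases eq_or_lt_of_le hxnn with h | h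
  · rw [← h]; exact norm_nonneg _
  · nlinarith


/-- polar decomposition bound, invertible case -/
lemma polar_inv {r : ℕ} (M : Matrix (Fin r) (Fin r) ℝ) (hdet : IsUnit M.det) :
    ∃ R : Matrix (Fin r) (Fin r) ℝ, Rᵀ * R = 1 ∧ spec (R - M) ≤ spec (1 - Mᵀ * M) := by
  classical
  have key : ∀ P : Matrix (Fin r) (Fin r) ℝ, P.PosSemidef → P * P = Mᵀ * M → Pᵀ = P →
      ∃ R : Matrix (Fin r) (Fin r) ℝ, Rᵀ * R = 1 ∧ spec (R - M) ≤ spec (1 - Mᵀ * M) := by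
    intro P hP hPP hPt
    have hdetS : IsUnit (Mᵀ * M).det := by
      rw [Matrix.det_mul, Matrix.det_transpose]
      exact hdet.mul hdet
    have hdetP : IsUnit P.det := by
      have : P.det * P.det = (Mᵀ * M).det := by rw [← Matrix.det_mul, hPP]
      exact isUnit_of_mul_isUnit_left (this ▸ hdetS)
    have hPinv : P * P⁻¹ = 1 := Matrix.mul_nonsing_inv _ hdetP
    have hPinv' : P⁻¹ * P = 1 := Matrix.nonsing_inv_mul _ hdetP
    have hPinvt : (P⁻¹)ᵀ = P⁻¹ := by rw [Matrix.transpose_nonsing_inv, hPt]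
    refine ⟨M * P⁻¹, ?_, ?_⟩
    · rw [Matrix.transpose_mul, hPinvt]
      calc P⁻¹ * Mᵀ * (M * P⁻¹) = P⁻¹ * (Mᵀ * M) * P⁻¹ := by simp only [Matrix.mul_assoc]
      _ = P⁻¹ * (P * P) * P⁻¹ := by rw [hPP]
      _ = (P⁻¹ * P) * (P * P⁻¹) := by simp only [Matrix.mul_assoc]
      _ = 1 := by rw [hPinv', hPinv, Matrix.one_mul]
    · have hRorth : (M * P⁻¹)ᵀ * (M * P⁻¹) = 1 := by
        rw [Matrix.transpose_mul, hPinvt]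
        calc P⁻¹ * Mᵀ * (M * P⁻¹) = P⁻¹ * (Mᵀ * M) * P⁻¹ := by simp only [Matrix.mul_assoc]
        _ = P⁻¹ * (P * P) * P⁻¹ := by rw [hPP]
        _ = (P⁻¹ * P) * (P * P⁻¹) := by simp only [Matrix.mul_assoc]
        _ = 1 := by rw [hPinv', hPinv, Matrix.one_mul]
      have hfact : M * P⁻¹ - M = (M * P⁻¹) * (1 - P) := by
        rw [Matrix.mul_sub, Matrix.mul_one, Matrix.mul_assoc, hPinv', Matrix.mul_one]
      have h1 : spec (M * P⁻¹ - M) ≤ spec (1 - P) := by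
        rw [hfact]
        calc spec ((M * P⁻¹) * (1 - P)) ≤ spec (M * P⁻¹) * spec (1 - P) := spec_mul_le _ _
        _ ≤ 1 * spec (1 - P) :=
          mul_le_mul_of_nonneg_right (spec_orth_le_one hRorth) (spec_nonneg _)
        _ = spec (1 - P) := one_mul _
      have hQpd : (1 + P).PosDef := Matrix.PosDef.add_posSemidef Matrix.PosDef.one hP
      have hQdet : IsUnit (1 + P).det := (Matrix.isUnit_iff_isUnit_det _).mp hQpd.isUnit
      have hQinv : (1 + P) * (1 + P)⁻¹ = 1 := Matrix.mul_nonsing_inv _ hQdet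
      have hfact2 : 1 - P = (1 - Mᵀ * M) * (1 + P)⁻¹ := by
        have h : (1 - P) * (1 + P) = 1 - Mᵀ * M := by
          rw [Matrix.sub_mul, Matrix.mul_add, Matrix.mul_add, Matrix.one_mul, Matrix.one_mul,
            Matrix.mul_one, hPP]
          abel
        rw [← h, Matrix.mul_assoc, hQinv, Matrix.mul_one]
      have h2 : spec (1 - P) ≤ spec (1 - Mᵀ * M) := by
        rw [hfact2]
        calc spec ((1 - Mᵀ * M) * (1 + P)⁻¹)
            ≤ spec (1 - Mᵀ * M) * spec (1 + P)⁻¹ := spec_mul_le _ _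
        _ ≤ spec (1 - Mᵀ * M) * 1 :=
          mul_le_mul_of_nonneg_left (spec_inv_one_add_le hP) (spec_nonneg _)
        _ = spec (1 - Mᵀ * M) := mul_one _
      exact h1.trans h2
  have hS : (Mᵀ * M).PosSemidef := by
    have := Matrix.posSemidef_conjTranspose_mul_self M
    rwa [ct_eq] at this
  open scoped MatrixOrder in
  refine key (CFC.sqrt (Mᵀ * M)) (CFC.sqrt_nonneg _).posSemidef
    (CFC.sqrt_mul_sqrt_self _ hS.nonneg) ?_
  rw [← ct_eq]
  open scoped MatrixOrder in
  exact (CFC.sqrt_nonneg (Mᵀ * M)).posSemidef.isHermitian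

/-- The spec function is continuous. -/
lemma spec_continuous {m n : ℕ} : Continuous (spec : Matrix (Fin m) (Fin n) ℝ → ℝ) := by
  have : Continuous (fun A : Matrix (Fin m) (Fin n) ℝ =>
      (Matrix.toEuclideanLin A).toContinuousLinearMap) := by
    have hlin : IsLinearMap ℝ (fun A : Matrix (Fin m) (Fin n) ℝ =>
        (Matrix.toEuclideanLin A).toContinuousLinearMap) := by
      constructor
      · intro A B; ext x; simp [map_add]
      · intro c A; ext x; simp [_root_.map_smul]
    exact LinearMap.continuous_of_finiteDimensional (hlin.mk' _)
  exact continuous_norm.comp this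

/-- The orthogonal group is compact. -/
lemma isCompact_orth {r : ℕ} :
    IsCompact {R : Matrix (Fin r) (Fin r) ℝ | Rᵀ * R = 1} := by
  have hC : IsCompact (Set.pi Set.univ (fun _ : Fin r =>
      Set.pi Set.univ (fun _ : Fin r => Set.Icc (-1 : ℝ) 1))) :=
    isCompact_univ_pi (fun _ => isCompact_univ_pi (fun _ => isCompact_Icc))
  have hclosed : IsClosed {R : Matrix (Fin r) (Fin r) ℝ | Rᵀ * R = 1} := by
    have hcont : Continuous (fun R : Matrix (Fin r) (Fin r) ℝ => Rᵀ * R) :=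
      Continuous.matrix_mul (Continuous.matrix_transpose continuous_id) continuous_id
    exact isClosed_eq hcont continuous_const
  refine hC.of_isClosed_subset hclosed ?_
  intro R hR
  rw [Set.mem_pi]
  intro i _
  rw [Set.mem_pi]
  intro j _
  rw [Set.mem_Icc]
  have hcol : ∑ k, R k j ^ 2 = 1 := by
    have : ∑ k, R k j * R k j =
        (1 : Matrix (Fin r) (Fin r) ℝ) j j := congrFun (congrFun hR j) j
    simpa [Matrix.mul_apply, Matrix.one_apply, sq] using this
  have hle : R i j ^ 2 ≤ 1 := by
    rw [← hcol]
    exact Finset.single_le_sum (f := fun k => R k j ^ 2)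
      (fun k _ => sq_nonneg _) (Finset.mem_univ i)
  constructor <;> nlinarith

/-- polar decomposition bound, general case, via limits -/
lemma polar_gen {r : ℕ} (M : Matrix (Fin r) (Fin r) ℝ) :
    ∃ R : Matrix (Fin r) (Fin r) ℝ, Rᵀ * R = 1 ∧ spec (R - M) ≤ spec (1 - Mᵀ * M) := by
  classical
  -- a sequence of small positive ε along which M + ε • 1 is invertible
  have hex : ∀ k : ℕ, ∃ t : ℝ, t ∈ Set.Ioo (0:ℝ) (1/(k+1)) ∧
      IsUnit (M + t • (1 : Matrix (Fin r) (Fin r) ℝ)).det := by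
    intro k
    have hfin : ({t : ℝ | -t ∈ spectrum ℝ M}).Finite := by
      have := Matrix.finite_spectrum (R := ℝ) M
      have himg : {t : ℝ | -t ∈ spectrum ℝ M} ⊆ (fun x => -x) '' (spectrum ℝ M) := by
        intro t ht
        exact ⟨-t, ht, by ring⟩
      exact (this.image _).subset himg
    have hIoo : (Set.Ioo (0:ℝ) (1/(k+1))).Infinite := by
      apply Set.Ioo_infinite
      positivity
    obtain ⟨t, ht⟩ := (hIoo.diff hfin).nonempty
    refine ⟨t, ht.1, ?_⟩
    have hnotspec : ¬ (-t ∈ spectrum ℝ M) := ht.2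
    rw [spectrum.mem_iff, not_not] at hnotspec
    have : (algebraMap ℝ (Matrix (Fin r) (Fin r) ℝ)) (-t) - M =
        -(M + t • 1) := by
      rw [Algebra.algebraMap_eq_smul_one, neg_smul]
      abel
    rw [this, IsUnit.neg_iff] at hnotspec
    exact (Matrix.isUnit_iff_isUnit_det _).mp hnotspec
  choose ε hεmem hεunit using hex
  set Mk : ℕ → Matrix (Fin r) (Fin r) ℝ := fun k => M + ε k • 1 with hMk
  have hMtend : Filter.Tendsto Mk Filter.atTop (nhds M) := by
    have hε0 : Filter.Tendsto ε Filter.atTop (nhds 0) := by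
      have hub : Filter.Tendsto (fun k : ℕ => 1/((k:ℝ)+1)) Filter.atTop (nhds 0) :=
        tendsto_one_div_add_atTop_nhds_zero_nat
      refine squeeze_zero (fun k => le_of_lt (hεmem k).1) (fun k => le_of_lt (hεmem k).2) hub
    have : Filter.Tendsto (fun k => M + ε k • (1 : Matrix (Fin r) (Fin r) ℝ))
        Filter.atTop (nhds (M + (0:ℝ) • 1)) := by
      exact Filter.Tendsto.add tendsto_const_nhds (hε0.smul tendsto_const_nhds)
    simpa using this
  choose Rk hRkorth hRkle using fun k => polar_inv (Mk k) (hεunit k)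
  haveI : FirstCountableTopology (Matrix (Fin r) (Fin r) ℝ) :=
    inferInstanceAs (FirstCountableTopology (Fin r → Fin r → ℝ))
  obtain ⟨R, hRmem, φ, hφ, hRtend⟩ := isCompact_orth.tendsto_subseq hRkorth
  refine ⟨R, hRmem, ?_⟩
  have hMtend' : Filter.Tendsto (Mk ∘ φ) Filter.atTop (nhds M) :=
    hMtend.comp hφ.tendsto_atTop
  have hL : Filter.Tendsto (fun k => spec (Rk (φ k) - Mk (φ k))) Filter.atTop
      (nhds (spec (R - M))) :=
    (spec_continuous.tendsto _).comp (hRtend.sub hMtend')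
  have hRcont : Continuous (fun A : Matrix (Fin r) (Fin r) ℝ => 1 - Aᵀ * A) :=
    continuous_const.sub
      (Continuous.matrix_mul (Continuous.matrix_transpose continuous_id) continuous_id)
  have hRl : Filter.Tendsto (fun k => spec (1 - (Mk (φ k))ᵀ * Mk (φ k))) Filter.atTop
      (nhds (spec (1 - Mᵀ * M))) :=
    (spec_continuous.tendsto _).comp ((hRcont.tendsto _).comp hMtend')
  exact le_of_tendsto_of_tendsto' hL hRl (fun k => hRkle (φ k))

end SpecAux

noncomputable def rowNorm {m n : ℕ} (A : Matrix (Fin m) (Fin n) ℝ) : ℝ :=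
  ⨆ i, Real.sqrt (∑ j, A i j ^ 2)

open SpecAux in

/-- min_{R ∈ O(r)} ‖UR − U*‖ ≤ √2 · ‖UUᵀ − U*U*ᵀ‖. -/
theorem stmt10 {n r : ℕ}
    (U Ustar : Matrix (Fin n) (Fin r) ℝ)
    (hU : Uᵀ * U = 1) (hUstar : Ustarᵀ * Ustar = 1) :
    ∃ R : Matrix (Fin r) (Fin r) ℝ, Rᵀ * R = 1 ∧
      spec (U * R - Ustar) ≤ Real.sqrt 2 * spec (U * Uᵀ - Ustar * Ustarᵀ) := by
  classical
  set M : Matrix (Fin r) (Fin r) ℝ := Uᵀ * Ustar with hM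
  obtain ⟨R, hRorth, hRle⟩ := polar_gen M
  refine ⟨R, hRorth, ?_⟩
  set N : Matrix (Fin n) (Fin r) ℝ := Ustar - U * M with hN
  set d : ℝ := spec (U * Uᵀ - Ustar * Ustarᵀ) with hd
  set a : ℝ := spec (1 - Mᵀ * M) with ha
  -- transpose of M
  have hMt : Mᵀ = Ustarᵀ * U := by
    rw [hM, Matrix.transpose_mul, Matrix.transpose_transpose]
  -- Nᵀ * N = 1 - Mᵀ * M
  have hNtN : Nᵀ * N = 1 - Mᵀ * M := by
    have expand : Nᵀ * N =
        Ustarᵀ * Ustar - Ustarᵀ * (U * M) - Mᵀ * Uᵀ * Ustar + Mᵀ * Uᵀ * (U * M) := by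
      rw [hN, Matrix.transpose_sub, Matrix.transpose_mul, Matrix.sub_mul,
        Matrix.mul_sub, Matrix.mul_sub]
      abel
    have t2 : Ustarᵀ * (U * M) = Mᵀ * M := by rw [← Matrix.mul_assoc, ← hMt]
    have t3 : Mᵀ * Uᵀ * Ustar = Mᵀ * M := by rw [Matrix.mul_assoc, ← hM]
    have t4 : Mᵀ * Uᵀ * (U * M) = Mᵀ * M := by
      calc Mᵀ * Uᵀ * (U * M) = Mᵀ * ((Uᵀ * U) * M) := by simp only [Matrix.mul_assoc]
      _ = Mᵀ * M := by rw [hU, Matrix.one_mul]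
    rw [expand, hUstar, t2, t3, t4]
    abel
  -- key identity
  have hkey : (U * R - Ustar)ᵀ * (U * R - Ustar) = (R - M)ᵀ * (R - M) + (1 - Mᵀ * M) := by
    have lhs : (U * R - Ustar)ᵀ * (U * R - Ustar) =
        Rᵀ * Uᵀ * (U * R) - Rᵀ * Uᵀ * Ustar - Ustarᵀ * (U * R) + Ustarᵀ * Ustar := by
      rw [Matrix.transpose_sub, Matrix.transpose_mul, Matrix.sub_mul,
        Matrix.mul_sub, Matrix.mul_sub]
      abel
    have l1 : Rᵀ * Uᵀ * (U * R) = Rᵀ * R := by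
      calc Rᵀ * Uᵀ * (U * R) = Rᵀ * ((Uᵀ * U) * R) := by simp only [Matrix.mul_assoc]
      _ = Rᵀ * R := by rw [hU, Matrix.one_mul]
    have l2 : Rᵀ * Uᵀ * Ustar = Rᵀ * M := by rw [Matrix.mul_assoc, ← hM]
    have l3 : Ustarᵀ * (U * R) = Mᵀ * R := by rw [← Matrix.mul_assoc, ← hMt]
    have rhs : (R - M)ᵀ * (R - M) =
        Rᵀ * R - Rᵀ * M - Mᵀ * R + Mᵀ * M := by
      rw [Matrix.transpose_sub, Matrix.sub_mul, Matrix.mul_sub, Matrix.mul_sub]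
      abel
    rw [lhs, l1, l2, l3, hUstar, rhs]
    abel
  -- N factors through the projection difference
  have hNfact : N = (Ustar * Ustarᵀ - U * Uᵀ) * Ustar := by
    rw [hN, Matrix.sub_mul]
    congr 1
    · rw [Matrix.mul_assoc, hUstar, Matrix.mul_one]
    · rw [Matrix.mul_assoc, ← hM]
  have hspecN_le_d : spec N ≤ d := by
    rw [hNfact]
    calc spec ((Ustar * Ustarᵀ - U * Uᵀ) * Ustar)
        ≤ spec (Ustar * Ustarᵀ - U * Uᵀ) * spec Ustar := spec_mul_le _ _
    _ ≤ spec (Ustar * Ustarᵀ - U * Uᵀ) * 1 :=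
        mul_le_mul_of_nonneg_left (spec_orth_le_one hUstar) (spec_nonneg _)
    _ = spec (Ustar * Ustarᵀ - U * Uᵀ) := mul_one _
    _ = d := by rw [hd, ← spec_neg (U * Uᵀ - Ustar * Ustarᵀ), neg_sub]
  -- N also factors through the projection 1 - U Uᵀ, giving spec N ≤ 1
  have hspecN_le_one : spec N ≤ 1 := by
    have hNfact2 : N = (1 - U * Uᵀ) * Ustar := by
      rw [hN, Matrix.sub_mul, Matrix.one_mul, Matrix.mul_assoc, ← hM]
    have hQt : (1 - U * Uᵀ)ᵀ = 1 - U * Uᵀ := by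
      rw [Matrix.transpose_sub, Matrix.transpose_one, Matrix.transpose_mul,
        Matrix.transpose_transpose]
    have hQQ : (1 - U * Uᵀ) * (1 - U * Uᵀ) = 1 - U * Uᵀ := by
      have h5 : U * Uᵀ * (U * Uᵀ) = U * Uᵀ := by
        calc U * Uᵀ * (U * Uᵀ) = U * ((Uᵀ * U) * Uᵀ) := by simp only [Matrix.mul_assoc]
        _ = U * Uᵀ := by rw [hU, Matrix.one_mul]
      simp only [Matrix.sub_mul, Matrix.mul_sub, Matrix.one_mul, Matrix.mul_one, h5]
      abel
    have hQle : spec (1 - U * Uᵀ) ≤ 1 := by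
      have h1 : spec (1 - U * Uᵀ) * spec (1 - U * Uᵀ) = spec (1 - U * Uᵀ) := by
        have := spec_transpose_mul_self (1 - U * Uᵀ)
        rw [hQt, hQQ] at this
        linarith
      nlinarith [spec_nonneg (1 - U * Uᵀ)]
    rw [hNfact2]
    calc spec ((1 - U * Uᵀ) * Ustar) ≤ spec (1 - U * Uᵀ) * spec Ustar := spec_mul_le _ _
    _ ≤ 1 * 1 := mul_le_mul hQle (spec_orth_le_one hUstar) (spec_nonneg _) zero_le_one
    _ = 1 := one_mul 1
  have ha_eq : a = spec N * spec N := by rw [ha, ← hNtN, spec_transpose_mul_self]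
  have ha_le_one : a ≤ 1 := by
    rw [ha_eq]; nlinarith [spec_nonneg N]
  have ha_le_d2 : a ≤ d * d := by
    rw [ha_eq]; nlinarith [spec_nonneg N, spec_nonneg (U * Uᵀ - Ustar * Ustarᵀ)]
  -- combine
  set s : ℝ := spec (U * R - Ustar) with hs
  have hs2 : s * s ≤ 2 * (d * d) := by
    have h1 : s * s = spec ((R - M)ᵀ * (R - M) + (1 - Mᵀ * M)) := by
      rw [hs, ← spec_transpose_mul_self, hkey]
    have h2 : spec ((R - M)ᵀ * (R - M) + (1 - Mᵀ * M)) ≤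
        spec ((R - M)ᵀ * (R - M)) + a := spec_add_le _ _
    have h3 : spec ((R - M)ᵀ * (R - M)) = spec (R - M) * spec (R - M) :=
      spec_transpose_mul_self _
    have h4 : spec (R - M) ≤ a := hRle
    nlinarith [spec_nonneg (R - M)]
  have hsnn : 0 ≤ s := spec_nonneg _
  have hdnn : 0 ≤ d := spec_nonneg _
  calc s = Real.sqrt (s * s) := (Real.sqrt_mul_self hsnn).symm
  _ ≤ Real.sqrt (2 * (d * d)) := Real.sqrt_le_sqrt hs2
  _ = Real.sqrt 2 * d := by
    rw [Real.sqrt_mul (by norm_num : (0:ℝ) ≤ 2), Real.sqrt_mul_self hdnn]
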